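/- arXiv:2605.23208 — 4 statements merged into one kernel-verified Lean document; each statement's English description precedes it below -/
import Mathlib

section
/- Let Y_1,...,Y_N be independent random variables with common mean μ and finite variances, and let w_1,...,w_N be fixed weights with w_i ≥ 0, Σ w_i = 1, and max_i w_i < 1/2. Define h_i = w_i²/(1 − 2w_i), H = Σ_ℓ h_ℓ, and μ̂ = Σ_i w_i Y_i. Then the estimator V̂ = Σ_i [h_i/(1+H)] (Y_i − μ̂)² satisfies E[V̂] = Var(μ̂) = Σ_i w_i² Var(Y_i). -/
open MeasureTheory ProbabilityTheory Finset

theorem dive_var_lin {Ω : Type*} [MeasureSpace Ω] [IsProbabilityMeasure (ℙ : Measure Ω)]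
    {N : ℕ} {Y : Fin N → Ω → ℝ}
    (hindep : iIndepFun Y ℙ)
    (hL2 : ∀ i, MemLp (Y i) 2 ℙ) (a : Fin N → ℝ) :
    variance (fun ω => ∑ l, a l * Y l ω) ℙ = ∑ l, (a l) ^ 2 * variance (Y l) ℙ := by
  have h1 : (fun ω => ∑ l, a l * Y l ω) = ∑ l : Fin N, (fun ω => a l * Y l ω) := by
    funext ω; simp
  rw [h1, IndepFun.variance_sum]
  · exact Finset.sum_congr rfl fun l _ => variance_const_mul (a l) (Y l) ℙ
  · exact fun l _ => (hL2 l).const_mul (a l)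
  · intro i _ j _ hij
    exact (hindep.indepFun hij).comp (measurable_const_mul (a i)) (measurable_const_mul (a j))

theorem dive_unbiasedness
    {Ω : Type*} [MeasureSpace Ω] [IsProbabilityMeasure (ℙ : Measure Ω)]
    {N : ℕ} (Y : Fin N → Ω → ℝ) (μ : ℝ) (w : Fin N → ℝ)
    (hindep : iIndepFun Y ℙ)
    (hmeas : ∀ i, Measurable (Y i))
    (hL2 : ∀ i, MemLp (Y i) 2 ℙ)
    (hmean : ∀ i, ∫ ω, Y i ω ∂ℙ = μ)
    (hw : ∀ i, 0 ≤ w i) (hwlt : ∀ i, w i < 1 / 2) (hsum : ∑ i, w i = 1)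
    (h : Fin N → ℝ) (hh : ∀ i, h i = (w i) ^ 2 / (1 - 2 * w i))
    (H : ℝ) (hH : H = ∑ l, h l) :
    (∫ ω, ∑ i, (h i / (1 + H)) * (Y i ω - ∑ l, w l * Y l ω) ^ 2 ∂ℙ
        = variance (fun ω => ∑ i, w i * Y i ω) ℙ)
      ∧ variance (fun ω => ∑ i, w i * Y i ω) ℙ = ∑ i, (w i) ^ 2 * variance (Y i) ℙ := by
  set V : ℝ := ∑ i, (w i) ^ 2 * variance (Y i) ℙ with hV
  have hdenpos : ∀ i, 0 < 1 - 2 * w i := by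
    intro i; have := hwlt i; linarith
  have hhnn : ∀ i, 0 ≤ h i := by
    intro i; rw [hh i]; exact div_nonneg (sq_nonneg _) (by linarith [hwlt i])
  have h1H : (0:ℝ) < 1 + H := by
    have : 0 ≤ H := hH ▸ Finset.sum_nonneg fun i _ => hhnn i
    linarith
  have hvar2 : variance (fun ω => ∑ i, w i * Y i ω) ℙ = V :=
    dive_var_lin hindep hL2 w
  refine ⟨?_, hvar2⟩
  rw [hvar2]
  -- the coefficients
  set a : Fin N → Fin N → ℝ := fun i l => (if l = i then 1 else 0) - w l with ha
  have hZeq : ∀ i, (fun ω => Y i ω - ∑ l, w l * Y l ω) = fun ω => ∑ l, a i l * Y l ω := by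
    intro i; funext ω
    simp only [ha, sub_mul, Finset.sum_sub_distrib, ite_mul, one_mul, zero_mul,
      Finset.sum_ite_eq' Finset.univ i, Finset.mem_univ, if_true]
  have hZmem : ∀ i, MemLp (fun ω => Y i ω - ∑ l, w l * Y l ω) 2 ℙ := by
    intro i
    rw [hZeq i]
    exact memLp_finset_sum Finset.univ fun l _ => (hL2 l).const_mul (a i l)
  have hYint : ∀ l, Integrable (Y l) ℙ := fun l => (hL2 l).integrable one_le_two
  have hZint : ∀ i, ∫ ω, (Y i ω - ∑ l, w l * Y l ω) ∂ℙ = 0 := by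
    intro i
    rw [integral_sub (hYint i) (integrable_finset_sum _ fun l _ => (hYint l).const_mul (w l))]
    rw [integral_finset_sum _ fun l _ => (hYint l).const_mul (w l)]
    simp only [integral_const_mul, hmean, ← Finset.sum_mul, hsum, one_mul, sub_self]
  have hkey : ∀ i, ∫ ω, (Y i ω - ∑ l, w l * Y l ω) ^ 2 ∂ℙ
      = (1 - 2 * w i) * variance (Y i) ℙ + V := by
    intro i
    have hvd := variance_eq_sub (hZmem i)
    simp only [Pi.pow_apply] at hvd
    have : ∫ ω, (Y i ω - ∑ l, w l * Y l ω) ^ 2 ∂ℙ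
        = variance (fun ω => Y i ω - ∑ l, w l * Y l ω) ℙ := by
      rw [hvd, hZint i]; ring
    rw [this, hZeq i, dive_var_lin hindep hL2 (a i)]
    have hterm : ∀ l, (a i l) ^ 2 * variance (Y l) ℙ
        = (if l = i then (1 - 2 * w i) * variance (Y i) ℙ else 0)
          + (w l) ^ 2 * variance (Y l) ℙ := by
      intro l
      by_cases hl : l = i
      · subst hl; simp only [ha, if_true]; ring
      · simp only [ha, hl, if_false]; ring
    simp only [hterm, Finset.sum_add_distrib, Finset.sum_ite_eq' Finset.univ i,
      Finset.mem_univ, if_true, hV]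
  -- integrate the sum
  have hintg : ∀ i, Integrable (fun ω => (h i / (1 + H)) * (Y i ω - ∑ l, w l * Y l ω) ^ 2) ℙ :=
    fun i => ((hZmem i).integrable_sq).const_mul _
  rw [integral_finset_sum _ fun i _ => hintg i]
  simp only [integral_const_mul, hkey]
  -- final algebra
  have hcancel : ∀ i, h i * (1 - 2 * w i) = (w i) ^ 2 := by
    intro i; rw [hh i, div_mul_cancel₀ _ (hdenpos i).ne']
  have hterm2 : ∀ i, h i / (1 + H) * ((1 - 2 * w i) * variance (Y i) ℙ + V)
      = ((w i) ^ 2 * variance (Y i) ℙ + h i * V) / (1 + H) := by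
    intro i
    linear_combination (variance (Y i) ℙ / (1 + H)) * hcancel i
  simp only [hterm2, ← Finset.sum_div, Finset.sum_add_distrib, ← Finset.sum_mul, ← hH, ← hV]
  field_simp
end

section
/- Suppose all N studies have equal weights w_i = 1/N with N ≥ 3. Then the DiVE variance estimator Σ_i [h_i/(1+Σ_ℓ h_ℓ)](Y_i − μ̂)² with h_i = w_i²/(1−2w_i) reduces to (1/(N(N−1))) Σ_i (Y_i − Ȳ)², where Ȳ = (1/N) Σ_i Y_i is the sample mean. -/
open Finset

theorem dive_equal_weights_reduction
    {N : ℕ} (hN : 3 ≤ N) (Y : Fin N → ℝ) (w : Fin N → ℝ)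
    (hw : ∀ i, w i = 1 / (N : ℝ))
    (h : Fin N → ℝ) (hh : ∀ i, h i = (w i) ^ 2 / (1 - 2 * w i)) :
    ∑ i, (h i / (1 + ∑ l, h l)) * (Y i - ∑ l, w l * Y l) ^ 2
      = (1 / ((N : ℝ) * ((N : ℝ) - 1))) * ∑ i, (Y i - (1 / (N : ℝ)) * ∑ l, Y l) ^ 2 := by
  have hn3 : (3 : ℝ) ≤ (N : ℝ) := by exact_mod_cast hN
  have hn0 : (N : ℝ) ≠ 0 := by linarith
  have hn2 : (N : ℝ) - 2 ≠ 0 := by linarith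
  have hn1 : (N : ℝ) - 1 ≠ 0 := by linarith
  have hhc : ∀ i, h i = 1 / ((N : ℝ) * ((N : ℝ) - 2)) := by
    intro i
    rw [hh, hw]
    field_simp
  have hsum : (∑ l, h l) = 1 / ((N : ℝ) - 2) := by
    simp only [hhc, Finset.sum_const, card_univ, Fintype.card_fin, nsmul_eq_mul]
    field_simp
  have hden : 1 + (∑ l, h l) = ((N : ℝ) - 1) / ((N : ℝ) - 2) := by
    rw [hsum]; field_simp; ring
  have hcoef : ∀ i, h i / (1 + ∑ l, h l) = 1 / ((N : ℝ) * ((N : ℝ) - 1)) := by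
    intro i
    rw [hhc, hden]
    field_simp
  have hmu : (∑ l, w l * Y l) = (1 / (N : ℝ)) * ∑ l, Y l := by
    rw [Finset.mul_sum]
    exact Finset.sum_congr rfl fun l _ => by rw [hw]
  simp only [hcoef, hmu]
  rw [← Finset.mul_sum]
end

section
/- Let w_1,...,w_N ∈ [0, 1/2) with Σ w_i = 1, h_i = w_i²/(1−2w_i), H = Σ h_ℓ, and let v_1,...,v_N ≥ 0. Then Σ_i [h_i/(1+H)]·[(1−2w_i)v_i + Σ_ℓ w_ℓ² v_ℓ] = Σ_i w_i² v_i. -/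
open Finset

theorem dive_algebraic_core
    {N : ℕ} (w v : Fin N → ℝ)
    (hw : ∀ i, 0 ≤ w i) (hwlt : ∀ i, w i < 1 / 2) (hsum : ∑ i, w i = 1)
    (hv : ∀ i, 0 ≤ v i)
    (h : Fin N → ℝ) (hh : ∀ i, h i = (w i) ^ 2 / (1 - 2 * w i))
    (H : ℝ) (hH : H = ∑ l, h l) :
    ∑ i, (h i / (1 + H)) * ((1 - 2 * w i) * v i + ∑ l, (w l) ^ 2 * v l)
      = ∑ i, (w i) ^ 2 * v i := by
  have hpos : ∀ i, 0 < 1 - 2 * w i := by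
    intro i; have := hwlt i; linarith
  have hkey : ∀ i, h i * (1 - 2 * w i) = (w i) ^ 2 := by
    intro i
    rw [hh i, div_mul_cancel₀]
    exact (hpos i).ne'
  have hhnn : ∀ i, 0 ≤ h i := by
    intro i
    rw [hh i]
    exact div_nonneg (sq_nonneg _) (hpos i).le
  have hHnn : 0 ≤ H := by
    rw [hH]; exact Finset.sum_nonneg fun i _ => hhnn i
  have hne : (1 : ℝ) + H ≠ 0 := by linarith
  set S := ∑ l, (w l) ^ 2 * v l with hS
  have h2 : ∑ i, h i * (1 - 2 * w i) * v i = S := by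
    apply Finset.sum_congr rfl
    intro i _
    rw [hkey i]
  calc ∑ i, (h i / (1 + H)) * ((1 - 2 * w i) * v i + S)
      = ∑ i, (h i * (1 - 2 * w i) * v i + h i * S) / (1 + H) := by
        apply Finset.sum_congr rfl
        intro i _
        field_simp
    _ = (S + H * S) / (1 + H) := by
        rw [← Finset.sum_div, Finset.sum_add_distrib, ← Finset.sum_mul, ← hH, h2]
    _ = S := by field_simp
end

section
/- Let Y_1,...,Y_N be independent random variables with common mean μ and finite variances, let w_i ∈ [0,1/2) be fixed weights summing to 1, μ̂ = Σ w_i Y_i, and suppose additionally Var(Y_i) = σ² for all i (homoscedastic case). Then the DiVE estimator V̂ = Σ_i [h_i/(1+H)](Y_i − μ̂)² with h_i = w_i²/(1−2w_i), H = Σ h_ℓ, satisfies E[V̂] = σ² Σ_i w_i². -/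
open MeasureTheory ProbabilityTheory Finset

theorem dive_unbiasedness_homoscedastic
    {Ω : Type*} [MeasureSpace Ω] [IsProbabilityMeasure (ℙ : Measure Ω)]
    {N : ℕ} (Y : Fin N → Ω → ℝ) (μ σ2 : ℝ) (w : Fin N → ℝ)
    (hindep : iIndepFun Y ℙ)
    (hmeas : ∀ i, Measurable (Y i))
    (hL2 : ∀ i, MemLp (Y i) 2 ℙ)
    (hmean : ∀ i, ∫ ω, Y i ω ∂ℙ = μ)
    (hvar : ∀ i, variance (Y i) ℙ = σ2)
    (hw : ∀ i, 0 ≤ w i) (hwlt : ∀ i, w i < 1 / 2) (hsum : ∑ i, w i = 1)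
    (h : Fin N → ℝ) (hh : ∀ i, h i = (w i) ^ 2 / (1 - 2 * w i))
    (H : ℝ) (hH : H = ∑ l, h l) :
    ∫ ω, ∑ i, (h i / (1 + H)) * (Y i ω - ∑ l, w l * Y l ω) ^ 2 ∂ℙ
      = σ2 * ∑ i, (w i) ^ 2 := by
  classical
  -- Key lemma: second moment of the residual
  have key : ∀ i : Fin N, ∫ ω, (Y i ω - ∑ l, w l * Y l ω) ^ 2 ∂ℙ
      = σ2 * (1 - 2 * w i + ∑ l, (w l) ^ 2) := by
    intro i
    set c : Fin N → ℝ := fun l => (if l = i then 1 else 0) - w l with hc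
    set Z : Fin N → Ω → ℝ := fun l ω => c l * Y l ω with hZ
    have hZL2 : ∀ l, MemLp (Z l) 2 ℙ := fun l => (hL2 l).const_mul _
    have hSL2 : MemLp (∑ l, Z l) 2 ℙ := memLp_finset_sum' _ (fun l _ => hZL2 l)
    have hfun : ∀ ω, (∑ l, Z l) ω = Y i ω - ∑ l, w l * Y l ω := by
      intro ω
      simp only [Finset.sum_apply, hZ, hc, sub_mul, Finset.sum_sub_distrib, ite_mul, one_mul,
        zero_mul, Finset.sum_ite_eq', Finset.mem_univ, if_pos]
    have hpair : Set.Pairwise ↑(Finset.univ : Finset (Fin N))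
        fun a b => IndepFun (Z a) (Z b) ℙ := by
      intro a _ b _ hab
      exact (hindep.indepFun hab).comp (measurable_const_mul (c a)) (measurable_const_mul (c b))
    have hvarS : variance (∑ l, Z l) ℙ = σ2 * (1 - 2 * w i + ∑ l, (w l) ^ 2) := by
      rw [IndepFun.variance_sum (fun l _ => hZL2 l) hpair]
      have hv : ∀ l, variance (Z l) ℙ = c l ^ 2 * σ2 := by
        intro l; rw [show Z l = fun ω => c l * Y l ω from rfl, variance_const_mul, hvar]
      simp only [hv, ← Finset.sum_mul]
      rw [mul_comm]
      congr 1
      have hcsq : ∀ l, c l ^ 2 = (if l = i then 1 - 2 * w i else 0) + (w l) ^ 2 := by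
        intro l
        by_cases hl : l = i <;> simp [hc, hl] <;> ring
      simp [hcsq, Finset.sum_add_distrib]
    have hmeanS : ∫ ω, (∑ l, Z l) ω ∂ℙ = 0 := by
      simp only [Finset.sum_apply]
      rw [integral_finset_sum _ (fun l _ => ((hZL2 l).integrable one_le_two))]
      have hint : ∀ l, ∫ ω, Z l ω ∂ℙ = c l * μ := by
        intro l; rw [show Z l = fun ω => c l * Y l ω from rfl, integral_const_mul, hmean]
      simp only [hint, ← Finset.sum_mul]
      have : ∑ l, c l = 0 := by
        simp [hc, Finset.sum_sub_distrib, hsum]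
      rw [this, zero_mul]
    have hvd := variance_eq_sub hSL2
    rw [hvarS] at hvd
    have heq : ∫ ω, (Y i ω - ∑ l, w l * Y l ω) ^ 2 ∂ℙ = ∫ ω, ((∑ l, Z l) ^ 2) ω ∂ℙ := by
      apply integral_congr_ae; filter_upwards with ω; simp [hfun ω]
    rw [heq]
    have hm : (∫ ω, (∑ l, Z l) ω ∂ℙ) ^ 2 = 0 := by rw [hmeanS]; ring
    linarith [hvd, hm]
  -- Integrability of each squared residual
  have hint : ∀ i : Fin N, Integrable (fun ω => (Y i ω - ∑ l, w l * Y l ω) ^ 2) ℙ := by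
    intro i
    have h1 : MemLp (fun ω => ∑ l, w l * Y l ω) 2 ℙ := by
      have hm := memLp_finset_sum' (μ := ℙ) Finset.univ
        (f := fun l => fun ω => w l * Y l ω) (fun l _ => (hL2 l).const_mul (w l))
      have e : (∑ l, fun ω => w l * Y l ω) = fun ω => ∑ l, w l * Y l ω := by
        funext ω; simp
      rwa [e] at hm
    have hM : MemLp (fun ω => Y i ω - ∑ l, w l * Y l ω) 2 ℙ := (hL2 i).sub h1
    have := hM.integrable_sq
    exact this.congr (by filter_upwards with ω; simp [Pi.pow_apply])
  -- Exchange integral and sum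
  rw [integral_finset_sum _ (fun i _ => (hint i).const_mul _)]
  simp only [integral_const_mul]
  simp only [key]
  -- Final algebra
  set S : ℝ := ∑ l, (w l) ^ 2 with hS
  have hpos : ∀ i, 0 < 1 - 2 * w i := by
    intro i; have := hwlt i; linarith
  have hhnn : ∀ i, 0 ≤ h i := by
    intro i; rw [hh i]; exact div_nonneg (sq_nonneg _) (hpos i).le
  have hHnn : 0 ≤ H := hH ▸ Finset.sum_nonneg (fun i _ => hhnn i)
  have hne : (1 : ℝ) + H ≠ 0 := by linarith
  have hhval : ∀ i, h i * (1 - 2 * w i) = (w i) ^ 2 := by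
    intro i; rw [hh i, div_mul_cancel₀ _ (hpos i).ne']
  have hsum2 : ∑ i, h i * (1 - 2 * w i + S) = S * (1 + H) := by
    have : ∀ i : Fin N, h i * (1 - 2 * w i + S) = h i * (1 - 2 * w i) + h i * S := by
      intro i; ring
    simp only [this, Finset.sum_add_distrib, hhval, ← Finset.sum_mul, ← hH, ← hS]
    ring
  have hterm : ∀ i : Fin N, h i / (1 + H) * (σ2 * (1 - 2 * w i + S))
      = σ2 / (1 + H) * (h i * (1 - 2 * w i + S)) := by
    intro i; ring
  simp only [hterm, ← Finset.mul_sum, hsum2]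
  field_simp
end
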